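/- Let s be a composition of positive integers and w a Stirling s-permutation. A pair (a,c) with a < c is an ascent of w (meaning 'ac' occurs as a consecutive substring of w) if and only if the corresponding pair is an ascent of the associated s-decreasing tree T(w); similarly (a,c) is a descent of w ('ca' occurs as a substring) iff it is a descent of T(w); and the inversion multiplicities agree: #_{T(w)}(c,a) = #_w(c,a) for all a < c. -/

import Mathlib

namespace SPermutahedron

/-! ### Planar rooted trees and `s`-decreasing trees -/

/-- A planar rooted tree: either a leaf, or an internal node with a natural
number label and an ordered list of children. -/
inductive PTree where
  | leaf : PTree
  | node : ℕ → List PTree → PTree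

mutual
  /-- The list of labels of the internal nodes of a planar tree. -/
  def labels : PTree → List ℕ
    | .leaf => []
    | .node i cs => i :: labelsList cs
  def labelsList : List PTree → List ℕ
    | [] => []
    | t :: ts => labels t ++ labelsList ts
end

mutual
  /-- Local condition for an `s`-decreasing tree: node `i` has `s i + 1`
  children and every internal-node descendant of `i` has a label `< i`. -/
  def IsSDecAux (s : ℕ → ℕ) : PTree → Prop
    | .leaf => True
    | .node i cs => cs.length = s i + 1 ∧ (∀ j ∈ labelsList cs, j < i) ∧ IsSDecList s cs
  def IsSDecList (s : ℕ → ℕ) : List PTree → Prop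
    | [] => True
    | t :: ts => IsSDecAux s t ∧ IsSDecList s ts
end

/-- `T` is an `s`-decreasing tree on `n` internal nodes: its internal nodes are
labeled bijectively by `1, …, n`, node `i` has `s i + 1` children, and any
internal-node descendant `j` of a node `i` satisfies `j < i`. -/
def IsSDecTree (s : ℕ → ℕ) (n : ℕ) (T : PTree) : Prop :=
  IsSDecAux s T ∧ (labels T).Perm (List.range' 1 n)

/-! ### Stirling `s`-permutations -/

/-- A word avoids the pattern `121`: there is never a letter `j` strictly in
between two occurrences of a letter `i` with `i < j`. -/
def Avoids121 (w : List ℕ) : Prop :=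
  ¬ ∃ (u₁ u₂ u₃ u₄ : List ℕ) (i j : ℕ), i < j ∧
      w = u₁ ++ i :: u₂ ++ j :: u₃ ++ i :: u₄

/-- A Stirling `s`-permutation: a permutation of the word `1^{s 1} 2^{s 2} ⋯ n^{s n}`
avoiding the pattern `121`. -/
def IsStirling (s : ℕ → ℕ) (n : ℕ) (w : List ℕ) : Prop :=
  (∀ x ∈ w, 1 ≤ x ∧ x ≤ n) ∧ (∀ i, 1 ≤ i → i ≤ n → w.count i = s i) ∧ Avoids121 w

/-- `(a, c)` is an ascent of `w`: `a < c` and `ac` is a consecutive substring. -/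
def WordAscent (w : List ℕ) (a c : ℕ) : Prop :=
  a < c ∧ ∃ u v, w = u ++ a :: c :: v

/-- `(a, c)` is a descent of `w`: `a < c` and `ca` is a consecutive substring. -/
def WordDescent (w : List ℕ) (a c : ℕ) : Prop :=
  a < c ∧ ∃ u v, w = u ++ c :: a :: v

/-- The inversion multiplicity `#_w(c, a)`: the number of occurrences of `c`
preceding the `a`-block of `w` (i.e. preceding the first occurrence of `a`). -/
def invW (w : List ℕ) (c a : ℕ) : ℕ := (w.takeWhile (fun x => decide (x ≠ a))).count c

/-! ### Combinatorics of `s`-decreasing trees: inversions, ascents, descents,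
and the in-order reading word -/

mutual
  /-- Whether the label `a` occurs as an internal node of the tree. -/
  def memT (a : ℕ) : PTree → Bool
    | .leaf => false
    | .node i cs => (a == i) || memList a cs
  def memList (a : ℕ) : List PTree → Bool
    | [] => false
    | t :: ts => memT a t || memList a ts
end

/-- The index (0-based) of the child subtree containing the label `a`. -/
def childIdx (a : ℕ) : List PTree → ℕ
  | [] => 0
  | t :: ts => if memT a t then 0 else childIdx a ts + 1

mutual
  /-- The tree-inversion multiplicity `#_T(c, a)` for `a < c`: it is `0` if `a`
  is left of `c`, `i` if `a` lies in the subtree `T^c_i` of the node `c`, and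
  `s c` if `a` is right of `c`. -/
  def invT (s : ℕ → ℕ) (c a : ℕ) : PTree → ℕ
    | .leaf => 0
    | .node i cs => if i = c then childIdx a cs else invTList s c a cs
  def invTList (s : ℕ → ℕ) (c a : ℕ) : List PTree → ℕ
    | [] => 0
    | t :: ts =>
      if memT c t && memT a t then invT s c a t
      else if memT a t then 0
      else if memT c t then (if memList a ts then s c else 0)
      else invTList s c a ts
end

mutual
  /-- The list of children of the node labeled `a` in the tree. -/
  def childrenAt (a : ℕ) : PTree → List PTree
    | .leaf => []
    | .node i cs => if i = a then cs else childrenAtList a cs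
  def childrenAtList (a : ℕ) : List PTree → List PTree
    | [] => []
    | t :: ts => if memT a t then childrenAt a t else childrenAtList a ts
end

/-- `a` is a descendant of the node labeled `c` in `T`. -/
def DescT (T : PTree) (c a : ℕ) : Prop := memList a (childrenAt c T) = true

/-- `(a, c)` is an ascent of the `s`-decreasing tree `T`: `a ∈ T^c_i` for some
`0 ≤ i < s c`; whenever `a < b < c` and `a ∈ T^b_i` then `i = s b`; and if
`s a > 0` then the last subtree `T^a_{s a}` is a single leaf. -/
def TreeAscent (s : ℕ → ℕ) (T : PTree) (a c : ℕ) : Prop :=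
  a < c ∧ DescT T c a ∧ invT s c a T < s c ∧
  (∀ b, a < b → b < c → DescT T b a → invT s b a T = s b) ∧
  (0 < s a → (childrenAt a T).getLast? = some PTree.leaf)

/-- `(a, c)` is a descent of the `s`-decreasing tree `T`: `a ∈ T^c_i` for some
`0 < i ≤ s c`; whenever `a < b < c` and `a ∈ T^b_i` then `i = 0`; and if
`s a > 0` then the first subtree `T^a_0` is a single leaf. -/
def TreeDescent (s : ℕ → ℕ) (T : PTree) (a c : ℕ) : Prop :=
  a < c ∧ DescT T c a ∧ 0 < invT s c a T ∧
  (∀ b, a < b → b < c → DescT T b a → invT s b a T = 0) ∧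
  (0 < s a → (childrenAt a T).head? = some PTree.leaf)

mutual
  /-- The reading word of an `s`-decreasing tree: the labels of nodes read along
  the in-order traversal of the caverns (spaces between consecutive siblings);
  this is the inverse of the bijection `w ↦ T(w)` from Stirling
  `s`-permutations to `s`-decreasing trees. -/
  def word : PTree → List ℕ
    | .leaf => []
    | .node i cs => wordList i cs
  def wordList (i : ℕ) : List PTree → List ℕ
    | [] => []
    | [t] => word t
    | t :: t' :: ts => word t ++ i :: wordList i (t' :: ts)
end


/-! ### Auxiliary lemmas -/

@[simp] lemma labels_leaf : labels .leaf = [] := by rw [labels]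
@[simp] lemma labels_node : labels (.node i cs) = i :: labelsList cs := by rw [labels]
@[simp] lemma labelsList_nil : labelsList [] = [] := by rw [labelsList]
@[simp] lemma labelsList_cons : labelsList (t :: ts) = labels t ++ labelsList ts := by
  rw [labelsList]
@[simp] lemma memT_leaf : memT a .leaf = false := by rw [memT]
@[simp] lemma memT_node : memT a (.node i cs) = ((a == i) || memList a cs) := by rw [memT]
@[simp] lemma memList_nil : memList a [] = false := by rw [memList]
@[simp] lemma memList_cons : memList a (t :: ts) = (memT a t || memList a ts) := by rw [memList]
@[simp] lemma invT_leaf : invT s c a .leaf = 0 := by rw [invT]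
lemma invT_node : invT s c a (.node i cs) = if i = c then childIdx a cs else invTList s c a cs := by
  rw [invT]
@[simp] lemma invTList_nil : invTList s c a [] = 0 := by rw [invTList]
lemma invTList_cons : invTList s c a (t :: ts) =
    (if memT c t && memT a t then invT s c a t
      else if memT a t then 0
      else if memT c t then (if memList a ts then s c else 0)
      else invTList s c a ts) := by rw [invTList]
@[simp] lemma childrenAt_leaf : childrenAt a .leaf = [] := by rw [childrenAt]
lemma childrenAt_node : childrenAt a (.node i cs) = if i = a then cs else childrenAtList a cs := by
  rw [childrenAt]
@[simp] lemma childrenAtList_nil : childrenAtList a [] = [] := by rw [childrenAtList]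
lemma childrenAtList_cons : childrenAtList a (t :: ts) =
    (if memT a t then childrenAt a t else childrenAtList a ts) := by rw [childrenAtList]
@[simp] lemma word_leaf : word .leaf = [] := by rw [word]
lemma word_node : word (.node i cs) = wordList i cs := by rw [word]
@[simp] lemma wordList_nil : wordList i [] = [] := by rw [wordList]
@[simp] lemma wordList_single : wordList i [t] = word t := by rw [wordList]
lemma wordList_cons2 : wordList i (t :: t' :: ts) = word t ++ i :: wordList i (t' :: ts) := by
  rw [wordList]

lemma ptree_strong_induction (P : PTree → Prop) (hleaf : P .leaf)
    (hnode : ∀ i cs, (∀ t ∈ cs, P t) → P (.node i cs)) : ∀ T, P T := by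
  suffices h : ∀ n T, sizeOf T ≤ n → P T from fun T => h (sizeOf T) T le_rfl
  intro n
  induction n with
  | zero =>
    intro T hT
    cases T with
    | leaf => exact hleaf
    | node i cs => simp at hT
  | succ n ih =>
    intro T hT
    cases T with
    | leaf => exact hleaf
    | node i cs =>
      refine hnode i cs (fun t ht => ih t ?_)
      have := List.sizeOf_lt_of_mem ht
      simp at hT
      omega

lemma memList_append : ∀ l l' : List PTree, memList a (l ++ l') = (memList a l || memList a l') := by
  intro l l'; induction l with
  | nil => simp
  | cons t ts ih => simp [ih, Bool.or_assoc]

lemma labelsList_append : ∀ l l' : List PTree, labelsList (l ++ l') = labelsList l ++ labelsList l' := by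
  intro l l'; induction l with
  | nil => simp
  | cons t ts ih => simp [ih]

lemma memT_iff : ∀ T : PTree, ∀ a, memT a T = true ↔ a ∈ labels T := by
  refine ptree_strong_induction _ (by simp) ?_
  intro i cs ih a
  simp only [memT_node, labels_node, Bool.or_eq_true, beq_iff_eq, List.mem_cons]
  refine or_congr Iff.rfl ?_
  induction cs with
  | nil => simp
  | cons t ts iht =>
    simp only [memList_cons, labelsList_cons, Bool.or_eq_true, List.mem_append]
    exact or_congr (ih t (by simp) a) (iht (fun t' ht' => ih t' (List.mem_cons_of_mem _ ht')))

lemma memList_iff : ∀ cs : List PTree, ∀ a, memList a cs = true ↔ a ∈ labelsList cs := by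
  intro cs a
  induction cs with
  | nil => simp
  | cons t ts ih => simp [memT_iff, ih]

lemma isSDecAux_node : IsSDecAux s (.node i cs) =
    (cs.length = s i + 1 ∧ (∀ j ∈ labelsList cs, j < i) ∧ IsSDecList s cs) := by
  rw [IsSDecAux]

lemma isSDecList_cons : IsSDecList s (t :: ts) = (IsSDecAux s t ∧ IsSDecList s ts) := by
  rw [IsSDecList]

lemma isSDecList_mem : ∀ cs : List PTree, IsSDecList s cs → t ∈ cs → IsSDecAux s t := by
  intro cs h ht
  induction cs with
  | nil => simp at ht
  | cons u us ih =>
    rw [isSDecList_cons] at h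
    rcases List.mem_cons.1 ht with rfl | ht'
    · exact h.1
    · exact ih h.2 ht'

lemma labels_sublist_of_mem : ∀ cs : List PTree, t ∈ cs → List.Sublist (labels t) (labelsList cs) := by
  intro cs ht
  induction cs with
  | nil => simp at ht
  | cons u us ih =>
    rcases List.mem_cons.1 ht with rfl | ht'
    · simpa using List.sublist_append_left _ _
    · simpa using (ih ht').trans (List.sublist_append_right _ _)

lemma mem_labelsList_of_mem (ht : t ∈ cs) (ha : a ∈ labels t) : a ∈ labelsList cs :=
  (labels_sublist_of_mem cs ht).mem ha

/-- The running well-formedness invariant for subtrees. -/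
def Good (s : ℕ → ℕ) (T : PTree) : Prop :=
  IsSDecAux s T ∧ (labels T).Nodup ∧ ∀ j ∈ labels T, 1 ≤ s j

lemma mem_child_lt (hG : IsSDecAux s (.node i cs)) (ht : t ∈ cs) (h : memT j t = true) : j < i := by
  rw [isSDecAux_node] at hG
  exact hG.2.1 j (mem_labelsList_of_mem ht ((memT_iff t j).1 h))

lemma good_child (hG : Good s (.node i cs)) (ht : t ∈ cs) : Good s t := by
  obtain ⟨h1, h2, h3⟩ := hG
  refine ⟨?_, ?_, ?_⟩
  · rw [isSDecAux_node] at h1; exact isSDecList_mem cs h1.2.2 ht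
  · simp only [labels_node, List.nodup_cons] at h2
    exact h2.2.sublist (labels_sublist_of_mem cs ht)
  · intro j hj
    exact h3 j (by simp [mem_labelsList_of_mem ht hj])

lemma memList_split (h : memList a cs = true) :
    ∃ l t r, cs = l ++ t :: r ∧ memT a t = true ∧ ∀ u ∈ l, memT a u = false := by
  induction cs with
  | nil => simp at h
  | cons t ts ih =>
    by_cases ht : memT a t = true
    · exact ⟨[], t, ts, rfl, ht, by simp⟩
    · rw [memList_cons, Bool.or_eq_true] at h
      obtain ⟨l, t', r, rfl, h1, h2⟩ := ih (h.resolve_left ht)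
      refine ⟨t :: l, t', r, rfl, h1, ?_⟩
      intro u hu
      rcases List.mem_cons.1 hu with rfl | hu'
      · exact Bool.not_eq_true _ ▸ (by simpa using ht)
      · exact h2 u hu'

/-- In a tree with nodup labels, a label occurs in at most one child. -/
lemma mem_unique (hnd : (labelsList cs).Nodup) (hcs : cs = l ++ t :: r)
    (ha : memT a t = true) :
    (∀ u ∈ l, memT a u = false) ∧ (∀ u ∈ r, memT a u = false) := by
  subst hcs
  rw [labelsList_append, labelsList_cons] at hnd
  have ha' : a ∈ labels t := (memT_iff t a).1 ha
  constructor
  · intro u hu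
    by_contra h
    rw [Bool.not_eq_false] at h
    have : a ∈ labelsList l := mem_labelsList_of_mem hu ((memT_iff u a).1 h)
    exact (List.disjoint_of_nodup_append hnd) this (by simp [ha'])
  · intro u hu
    by_contra h
    rw [Bool.not_eq_false] at h
    have h2 := (List.nodup_append.1 hnd).2.1
    have : a ∈ labelsList r := mem_labelsList_of_mem hu ((memT_iff u a).1 h)
    exact (List.disjoint_of_nodup_append h2) ha' this

lemma nodup_labelsList_children (hG : Good s (.node i cs)) : (labelsList cs).Nodup := by
  have := hG.2.1
  simp only [labels_node, List.nodup_cons] at this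
  exact this.2

lemma memList_eq_false_of (h : ∀ t ∈ cs, memT a t = false) : memList a cs = false := by
  induction cs with
  | nil => simp
  | cons t ts ih =>
    simp only [memList_cons, Bool.or_eq_false_iff]
    exact ⟨h t (by simp), ih (fun u hu => h u (by simp [hu]))⟩

lemma count_wordList (i j : ℕ) (s : ℕ → ℕ) : ∀ cs : List PTree, cs ≠ [] →
    (labelsList cs).Nodup →
    (∀ t ∈ cs, memT i t = false) →
    (∀ t ∈ cs, (word t).count j = if memT j t then s j else 0) →
    (wordList i cs).count j =
      (if j = i then cs.length - 1 else 0) + (if memList j cs then s j else 0) := by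
  intro cs
  induction cs with
  | nil => intro h; simp at h
  | cons t ts ih =>
    intro _ hnd hroot hcnt
    cases ts with
    | nil =>
      simp only [wordList_single]
      rw [hcnt t (by simp)]
      rcases eq_or_ne j i with rfl | hji
      · simp [hroot t (by simp)]
      · simp [hji]
    | cons t' ts' =>
      rw [wordList_cons2, List.count_append, List.count_cons]
      rw [hcnt t (by simp)]
      rw [ih (by simp) (by rw [labelsList_cons] at hnd; exact (List.nodup_append.1 hnd).2.1)
        (fun u hu => hroot u (by simp [hu]))
        (fun u hu => hcnt u (by simp at hu ⊢; tauto))]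
      have hdisj : memT j t = true → memList j (t' :: ts') = true → False := by
        intro h1 h2
        rw [labelsList_cons] at hnd
        have := List.disjoint_of_nodup_append hnd
        exact this ((memT_iff t j).1 h1) ((memList_iff _ j).1 h2)
      rcases eq_or_ne j i with rfl | hji
      · have h1 : memT j t = false := hroot t (by simp)
        have h2 : memList j (t' :: ts') = false :=
          memList_eq_false_of (fun u hu => hroot u (by simp [hu]))
        simp only [memList_cons, h1, h2, if_pos rfl]
        simp
      · rcases hmt : memT j t with _ | _
        · simp [hji, Ne.symm hji, hmt]
        · have h2 : memList j (t' :: ts') = false := by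
            rw [← Bool.not_eq_true]; intro hc; exact hdisj hmt hc
          simp [hji, Ne.symm hji, hmt, h2]

lemma count_word (s : ℕ → ℕ) (j : ℕ) :
    ∀ T : PTree, Good s T → (word T).count j = if memT j T then s j else 0 := by
  refine ptree_strong_induction _ (by simp) ?_
  intro i cs ih hG
  have hlen : cs.length = s i + 1 := by
    have := hG.1; rw [isSDecAux_node] at this; exact this.1
  rw [word_node, count_wordList i j s cs (by rintro rfl; simp at hlen)
    (nodup_labelsList_children hG)
    (fun t ht => by
      rw [← Bool.not_eq_true]; intro hc; exact lt_irrefl i (mem_child_lt hG.1 ht hc))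
    (fun t ht => ih t ht (good_child hG ht))]
  rcases eq_or_ne j i with rfl | hji
  · have h2 : memList j cs = false := memList_eq_false_of (fun u hu => by
      rw [← Bool.not_eq_true]; intro hc; exact lt_irrefl j (mem_child_lt hG.1 hu hc))
    simp [h2, hlen]
  · simp [hji, hlen, Ne.symm hji]

lemma mem_word_iff (hG : Good s T) : j ∈ word T ↔ memT j T = true := by
  have hc := count_word s j T hG
  constructor
  · intro h
    by_contra hm
    rw [Bool.not_eq_true] at hm
    rw [hm] at hc
    simp at hc
    exact (List.count_eq_zero.1 hc) h
  · intro h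
    rw [h] at hc
    simp at hc
    have hs : 1 ≤ s j := hG.2.2 j ((memT_iff T j).1 h)
    rw [← List.count_pos_iff, hc]
    omega

lemma word_ne_nil (hG : Good s (.node i cs)) : word (.node i cs) ≠ [] := by
  intro h
  have : i ∈ word (.node i cs) := (mem_word_iff hG).2 (by simp)
  rw [h] at this
  simp at this

lemma word_eq_nil_iff (hG : Good s T) : word T = [] ↔ T = .leaf := by
  cases T with
  | leaf => simp
  | node i cs => simp [word_ne_nil hG]

lemma childrenAtList_eq_nil (h : ∀ u ∈ cs, memT b u = false) : childrenAtList b cs = [] := by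
  induction cs with
  | nil => simp
  | cons t ts ih =>
    rw [childrenAtList_cons, if_neg (by simp [h t (by simp)])]
    exact ih (fun u hu => h u (by simp [hu]))

lemma childrenAt_eq_nil : ∀ T : PTree, memT b T = false → childrenAt b T = [] := by
  refine ptree_strong_induction _ (by simp) ?_
  intro i cs ih h
  simp only [memT_node, Bool.or_eq_false_iff, beq_eq_false_iff_ne] at h
  rw [childrenAt_node, if_neg (fun hh => h.1 hh.symm)]
  refine childrenAtList_eq_nil (fun u hu => ?_)
  rw [← Bool.not_eq_true]
  intro hc
  have hm : memList b cs = true := by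
    rw [memList_iff]
    exact mem_labelsList_of_mem hu ((memT_iff u b).1 hc)
  simp [h.2] at hm

lemma childrenAtList_eq_of (hl : ∀ u ∈ l, memT b u = false) (hb : memT b t = true) :
    childrenAtList b (l ++ t :: r) = childrenAt b t := by
  induction l with
  | nil => simp [childrenAtList_cons, hb]
  | cons u us ih =>
    rw [List.cons_append, childrenAtList_cons, if_neg (by simp [hl u (by simp)])]
    exact ih (fun v hv => hl v (by simp [hv]))

lemma memT_of_descT (h : DescT T b a) : memT b T = true := by
  by_contra hc
  rw [Bool.not_eq_true] at hc
  simp only [DescT] at h; rw [childrenAt_eq_nil T hc] at h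
  simp at h

lemma desc_mem : ∀ T : PTree, ∀ b x, memList x (childrenAt b T) = true → memT x T = true := by
  refine ptree_strong_induction _ (by simp) ?_
  intro i cs ih b x h
  rw [childrenAt_node] at h
  by_cases hib : i = b
  · rw [if_pos hib] at h; simp [h]
  · rw [if_neg hib] at h
    suffices hs : memList x cs = true by simp [hs]
    clear hib
    induction cs with
    | nil => simp at h
    | cons t ts iht =>
      rw [childrenAtList_cons] at h
      by_cases hbt : memT b t = true
      · rw [if_pos hbt] at h
        simp [ih t (by simp) b x h]
      · rw [if_neg hbt] at h
        simp [iht (fun u hu => ih u (by simp [hu])) h]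

lemma desc_lt : ∀ T : PTree, IsSDecAux s T → ∀ b x, memList x (childrenAt b T) = true → x < b := by
  refine ptree_strong_induction _ (by simp) ?_
  intro i cs ih hG b x h
  rw [childrenAt_node] at h
  by_cases hib : i = b
  · subst hib
    rw [if_pos rfl] at h
    rw [isSDecAux_node] at hG
    exact hG.2.1 x ((memList_iff cs x).1 h)
  · rw [if_neg hib] at h
    have hGl : IsSDecList s cs := by rw [isSDecAux_node] at hG; exact hG.2.2
    clear hib hG
    induction cs with
    | nil => simp at h
    | cons t ts iht =>
      rw [childrenAtList_cons] at h
      rw [isSDecList_cons] at hGl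
      by_cases hbt : memT b t = true
      · rw [if_pos hbt] at h
        exact ih t (by simp) hGl.1 b x h
      · rw [if_neg hbt] at h
        exact iht (fun u hu => ih u (by simp [hu])) h hGl.2

lemma childrenAt_trans (hG : Good s (.node i cs)) (hib : i ≠ b) (hcs : cs = l ++ t :: r)
    (hb : memT b t = true) : childrenAt b (.node i cs) = childrenAt b t := by
  rw [childrenAt_node, if_neg hib, hcs]
  exact childrenAtList_eq_of (fun u hu => (mem_unique (nodup_labelsList_children hG) hcs hb).1 u hu) hb

lemma invTList_eq_of (hl : ∀ u ∈ l, memT c u = false ∧ memT a u = false)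
    (hc : memT c t = true) (ha : memT a t = true) :
    invTList s c a (l ++ t :: r) = invT s c a t := by
  induction l with
  | nil => simp [invTList_cons, hc, ha]
  | cons u us ih =>
    rw [List.cons_append, invTList_cons]
    have h1 := (hl u (by simp)).1
    have h2 := (hl u (by simp)).2
    simp only [h1, h2, Bool.false_and, Bool.false_eq_true, if_false]
    exact ih (fun v hv => hl v (by simp [hv]))

lemma invT_trans (hG : Good s (.node i cs)) (hic : i ≠ c) (hcs : cs = l ++ t :: r)
    (hc : memT c t = true) (ha : memT a t = true) :
    invT s c a (.node i cs) = invT s c a t := by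
  rw [invT_node, if_neg hic, hcs]
  have h1 := mem_unique (nodup_labelsList_children hG) hcs hc
  have h2 := mem_unique (nodup_labelsList_children hG) hcs ha
  exact invTList_eq_of (fun u hu => ⟨h1.1 u hu, h2.1 u hu⟩) hc ha

lemma childIdx_lt_length : ∀ cs : List PTree, memList a cs = true → childIdx a cs < cs.length := by
  intro cs h
  induction cs with
  | nil => simp at h
  | cons t ts ih =>
    rw [childIdx]
    by_cases hat : memT a t = true
    · simp [hat]
    · rw [if_neg hat]
      rw [memList_cons, Bool.or_eq_true] at h
      have := ih (h.resolve_left hat)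
      simp
      omega

lemma childIdx_append (hl : ∀ u ∈ l, memT a u = false) (ht : memT a t = true) :
    childIdx a (l ++ t :: r) = l.length := by
  induction l with
  | nil => simp [childIdx, ht]
  | cons u us ih =>
    rw [List.cons_append, childIdx, if_neg (by simp [hl u (by simp)])]
    rw [ih (fun v hv => hl v (by simp [hv]))]
    simp

lemma descT_trans (hG : Good s (.node i cs)) (hib : i ≠ b) (hcs : cs = l ++ t :: r)
    (hb : memT b t = true) : (DescT (.node i cs) b a ↔ DescT t b a) := by
  show memList a (childrenAt b (PTree.node i cs)) = true ↔ memList a (childrenAt b t) = true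
  rw [childrenAt_trans hG hib hcs hb]

/-- If `a` occurs in the child `t` and `b ≠ i` has `a` as descendant, then `b ∈ t`. -/
lemma descT_local (hG : Good s (.node i cs)) (hib : i ≠ b) (hcs : cs = l ++ t :: r)
    (ha : memT a t = true) (h : DescT (.node i cs) b a) : memT b t = true := by
  have hbT : memT b (.node i cs) = true := memT_of_descT h
  rw [memT_node, Bool.or_eq_true, beq_iff_eq] at hbT
  rcases hbT with rfl | hbcs
  · exact absurd rfl hib
  · obtain ⟨l', t', r', hcs', hb', hl'⟩ := memList_split hbcs
    have htrans := childrenAt_trans hG hib hcs' hb'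
    have h'' : memList a (childrenAt b (PTree.node i cs)) = true := h
    rw [htrans] at h''
    have hat' : memT a t' = true := desc_mem t' b a h''
    -- a occurs in t (given) and in t'; by nodup they are the same position
    by_contra hbt
    have huniq := mem_unique (nodup_labelsList_children hG) hcs ha
    -- t' ∈ l ∨ t' = t ∨ t' ∈ r
    have ht'mem : t' ∈ cs := by rw [hcs']; simp
    rw [hcs] at ht'mem
    rcases List.mem_append.1 ht'mem with hmem | hmem
    · rw [huniq.1 t' hmem] at hat'; simp at hat'
    · rcases List.mem_cons.1 hmem with rfl | hmem'
      · exact hbt hb'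
      · rw [huniq.2 t' hmem'] at hat'; simp at hat'

lemma invT_eq_childIdx : ∀ T : PTree, Good s T → ∀ b a, DescT T b a →
    invT s b a T = childIdx a (childrenAt b T) := by
  refine ptree_strong_induction _ ?_ ?_
  · intro _ b a h
    have h' : memList a (childrenAt b PTree.leaf) = true := h
    rw [childrenAt_leaf] at h'
    simp at h'
  · intro i cs ih hG b a h
    by_cases hib : i = b
    · subst hib
      rw [invT_node, if_pos rfl, childrenAt_node, if_pos rfl]
    · have hbT : memT b (.node i cs) = true := memT_of_descT h
      rw [memT_node, Bool.or_eq_true, beq_iff_eq] at hbT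
      rcases hbT with rfl | hbcs
      · exact absurd rfl hib
      · obtain ⟨l, t, r, hcs, hbt, hl⟩ := memList_split hbcs
        have htrans := childrenAt_trans hG hib hcs hbt
        have h'' : memList a (childrenAt b (PTree.node i cs)) = true := h
        rw [htrans] at h''
        have hat : memT a t = true := desc_mem t b a h''
        rw [invT_trans hG hib hcs hbt hat, htrans]
        exact ih t (by rw [hcs]; simp) (good_child hG (by rw [hcs]; simp)) b a h''

section ListInfra
variable {α : Type*}

lemma singleton_prefix_iff {c : α} {w : List α} : [c] <+: w ↔ w.head? = some c := by
  cases w with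
  | nil => simp
  | cons x v => simp [List.cons_prefix_cons, eq_comm]

lemma pair_prefix_iff {a c : α} {w : List α} :
    [a, c] <+: w ↔ w.head? = some a ∧ w.tail.head? = some c := by
  cases w with
  | nil => simp
  | cons x v => simp [List.cons_prefix_cons, singleton_prefix_iff, eq_comm]

lemma infix_pair_append (a c : α) : ∀ u v : List α,
    ([a, c] <:+: (u ++ v) ↔
      [a, c] <:+: u ∨ [a, c] <:+: v ∨ (u.getLast? = some a ∧ v.head? = some c)) := by
  intro u
  induction u with
  | nil => intro v; simp
  | cons x u ih =>
    intro v
    rw [List.cons_append, List.infix_cons_iff, ih, List.infix_cons_iff (l₂ := u),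
      pair_prefix_iff, pair_prefix_iff]
    cases u with
    | nil =>
      simp
      tauto
    | cons y u' =>
      simp only [List.cons_append, List.head?_cons, List.tail_cons, List.getLast?_cons_cons]
      tauto

lemma takeWhile_append_of_all {p : α → Bool} {u v : List α} (h : ∀ x ∈ u, p x = true) :
    (u ++ v).takeWhile p = u ++ v.takeWhile p := by
  induction u with
  | nil => simp
  | cons x u ih =>
    have hx := h x (by simp)
    simp only [List.cons_append, List.takeWhile_cons, hx, if_true]
    rw [ih (fun y hy => h y (by simp [hy]))]

lemma takeWhile_append_of_ex {p : α → Bool} {u v : List α} (h : ∃ x ∈ u, ¬ p x = true) :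
    (u ++ v).takeWhile p = u.takeWhile p := by
  induction u with
  | nil => simp at h
  | cons x u ih =>
    by_cases hx : p x = true
    · rw [List.cons_append, List.takeWhile_cons, if_pos hx, List.takeWhile_cons, if_pos hx]
      refine congrArg _ (ih ?_)
      obtain ⟨y, hy, hpy⟩ := h
      rcases List.mem_cons.1 hy with rfl | hy'
      · exact absurd hx hpy
      · exact ⟨y, hy', hpy⟩
    · rw [List.cons_append, List.takeWhile_cons, if_neg hx, List.takeWhile_cons, if_neg hx]

end ListInfra

lemma invW_append_left (ha : a ∉ u) : invW (u ++ v) c a = u.count c + invW v c a := by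
  unfold invW
  rw [takeWhile_append_of_all (fun x hx => by simp; rintro rfl; exact ha hx)]
  rw [List.count_append]

lemma invW_append_right (ha : a ∈ u) : invW (u ++ v) c a = invW u c a := by
  unfold invW
  rw [takeWhile_append_of_ex ⟨a, ha, by simp⟩]

lemma invW_cons_ne (h : a ≠ x) : invW (x :: v) c a = (if x = c then 1 else 0) + invW v c a := by
  have hx : x :: v = [x] ++ v := rfl
  rw [hx, invW_append_left (by simp [h])]
  congr 1
  rcases eq_or_ne x c with rfl | hxc
  · simp
  · simp [hxc, Ne.symm hxc]

lemma invW_cons_self : invW (a :: v) c a = 0 := by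
  unfold invW
  simp [List.takeWhile_cons]

lemma invW_eq_count (ha : a ∉ w) : invW w c a = w.count c := by
  have h2 := takeWhile_append_of_all (p := fun x => decide (x ≠ a)) (u := w) (v := [])
    (fun x hx => by simp; rintro rfl; exact ha hx)
  simp only [List.append_nil, List.takeWhile_nil] at h2
  unfold invW
  rw [h2]

lemma invW_le_count : invW w c a ≤ w.count c :=
  ((List.takeWhile_sublist _).count_le c)

lemma wordList_ne_nil2 : wordList i (t :: t' :: ts) ≠ [] := by
  rw [wordList_cons2]
  cases h : word t <;> simp

lemma wordList_ne_nil_of (cs : List PTree) (h : 2 ≤ cs.length) : wordList i cs ≠ [] := by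
  match cs, h with
  | t :: t' :: ts, _ => exact wordList_ne_nil2

lemma descT_ne_root (hG : Good s (.node i cs)) (h : DescT (.node i cs) b x) : x ≠ i := by
  have hxb : x < b := desc_lt _ hG.1 b x h
  have hbT : memT b (.node i cs) = true := memT_of_descT h
  rw [memT_node, Bool.or_eq_true, beq_iff_eq] at hbT
  rcases hbT with rfl | hbcs
  · omega
  · obtain ⟨l, u, r, hcs, hbu, _⟩ := memList_split hbcs
    have : b < i := mem_child_lt hG.1 (by rw [hcs]; simp) hbu
    omega

lemma wordList_getLast (i : ℕ) : ∀ l : List PTree, ∀ t : PTree, l ≠ [] →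
    (wordList i (l ++ [t])).getLast? = if word t = [] then some i else (word t).getLast? := by
  intro l
  induction l with
  | nil => intro t h; simp at h
  | cons x l' ih =>
    intro t _
    cases l' with
    | nil =>
      rw [show ([x] ++ [t] : List PTree) = x :: t :: [] by rfl, wordList_cons2, wordList_single]
      cases hw : word t with
      | nil => rw [if_pos rfl]; exact List.getLast?_concat
      | cons y ys =>
        rw [if_neg (by simp)]
        rw [List.append_cons (word x) i (y :: ys)]
        exact List.getLast?_append_of_ne_nil _ (by simp)
    | cons z l'' =>
      rw [show ((x :: z :: l'') ++ [t]) = x :: z :: (l'' ++ [t]) by simp, wordList_cons2]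
      have hne : wordList i (z :: (l'' ++ [t])) ≠ [] := by
        refine wordList_ne_nil_of _ ?_
        simp
      rw [List.append_cons (word x) i (wordList i (z :: (l'' ++ [t])))]
      rw [List.getLast?_append_of_ne_nil _ hne]
      exact ih t (by simp)

lemma wordList_head (i : ℕ) (t : PTree) (r : List PTree) (hr : r ≠ []) :
    (wordList i (t :: r)).head? = if word t = [] then some i else (word t).head? := by
  cases r with
  | nil => simp at hr
  | cons t' ts =>
    rw [wordList_cons2, List.head?_append]
    cases hw : word t with
    | nil => simp
    | cons y ys => simp

lemma getLast?_eq_of_concat_eq {l l1 : List PTree} {t u : PTree} {r1 : List PTree}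
    (h : l ++ [t] = l1 ++ u :: r1) (hr : r1 = []) : u = t := by
  subst hr
  have h1 : (l ++ [t]).getLast? = some t := List.getLast?_concat
  have h2 : (l1 ++ [u]).getLast? = some u := List.getLast?_concat
  rw [h] at h1
  rw [h2] at h1
  exact Option.some_injective _ h1

lemma getLast_word (s : ℕ → ℕ) : ∀ T : PTree, Good s T → ∀ a,
    ((word T).getLast? = some a ↔
      (memT a T = true ∧ (∀ b, DescT T b a → invT s b a T = s b) ∧
        (childrenAt a T).getLast? = some .leaf)) := by
  refine ptree_strong_induction _ ?_ ?_
  · intro _ a; simp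
  · intro i cs ih hG a
    have hlen : cs.length = s i + 1 := by
      have := hG.1; rw [isSDecAux_node] at this; exact this.1
    have hsi : 1 ≤ s i := hG.2.2 i (by simp)
    obtain ⟨l, t, hcs⟩ : ∃ l t, cs = l ++ [t] := by
      rcases List.eq_nil_or_concat cs with h | ⟨l, t, h⟩
      · rw [h] at hlen; simp at hlen
      · exact ⟨l, t, by simpa using h⟩
    have hl : l ≠ [] := by
      rintro rfl
      rw [hcs] at hlen; simp at hlen; omega
    have htmem : t ∈ cs := by rw [hcs]; simp
    have hGt : Good s t := good_child hG htmem
    have hLast : (word (.node i cs)).getLast? =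
        if word t = [] then some i else (word t).getLast? := by
      rw [word_node, hcs]; exact wordList_getLast i l t hl
    have hroot_not : ∀ u ∈ cs, memT i u = false := fun u hu => by
      rw [← Bool.not_eq_true]; intro hcon; exact lt_irrefl i (mem_child_lt hG.1 hu hcon)
    have hchildroot : childrenAt i (.node i cs) = cs := by rw [childrenAt_node, if_pos rfl]
    by_cases ht : t = PTree.leaf
    · -- last child is a leaf: last letter is the root i
      have hwt : word t = [] := by rw [ht]; simp
      rw [hLast, if_pos hwt]
      constructor
      · rintro h
        have ha : a = i := by simpa using h.symm
        subst ha
        refine ⟨by simp, ?_, ?_⟩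
        · intro b hb
          exact absurd rfl (descT_ne_root hG hb)
        · rw [hchildroot, hcs, List.getLast?_concat, ht]
      · rintro ⟨h1, h2, h3⟩
        by_cases hai : a = i
        · rw [hai]
        · exfalso
          rw [memT_node, Bool.or_eq_true, beq_iff_eq] at h1
          rcases h1 with rfl | hacs
          · exact hai rfl
          · obtain ⟨l1, u, r1, hcs1, hau, hl1⟩ := memList_split hacs
            have hdesc : DescT (.node i cs) i a := by
              show memList a (childrenAt i (.node i cs)) = true
              rw [hchildroot]; exact hacs
            have hinv := h2 i hdesc
            rw [invT_node, if_pos rfl, hcs1, childIdx_append hl1 hau] at hinv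
            have hlen1 : cs.length = l1.length + 1 + r1.length := by rw [hcs1]; simp; try omega
            have hr1 : r1 = [] := by
              cases r1 with
              | nil => rfl
              | cons _ _ => exfalso; rw [hinv] at hlen1; simp at hlen1; omega
            have : u = t := getLast?_eq_of_concat_eq (by rw [← hcs, hcs1]) hr1
            rw [this, ht] at hau
            simp at hau
    · -- last child is not a leaf
      have hwt : word t ≠ [] := by
        intro hcon; exact ht ((word_eq_nil_iff hGt).1 hcon)
      rw [hLast, if_neg hwt, ih t htmem hGt a]
      have hlast_cs : cs.getLast? = some t := by rw [hcs]; exact List.getLast?_concat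
      constructor
      · rintro ⟨h1, h2, h3⟩
        have hai : a ≠ i := by
          intro hcon; subst hcon
          exact lt_irrefl a (mem_child_lt hG.1 htmem h1)
        have huniq := mem_unique (nodup_labelsList_children hG) hcs h1
        have hacs : memList a cs = true := by
          rw [hcs, memList_append]; simp [h1]
        refine ⟨by simp [hacs], ?_, ?_⟩
        · intro b hb
          by_cases hbi : b = i
          · subst hbi
            rw [invT_node, if_pos rfl, hcs, childIdx_append (huniq.1) h1]
            have : cs.length = l.length + 1 := by rw [hcs]; simp
            omega
          · have hbt : memT b t = true := descT_local hG (Ne.symm hbi) hcs h1 hb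
            rw [invT_trans hG (Ne.symm hbi) hcs hbt h1]
            exact h2 b ((descT_trans hG (Ne.symm hbi) hcs hbt).1 hb)
        · rw [childrenAt_trans hG (Ne.symm hai) hcs h1]
          exact h3
      · rintro ⟨h1, h2, h3⟩
        have hai : a ≠ i := by
          intro hcon; subst hcon
          rw [hchildroot, hlast_cs] at h3
          exact ht (Option.some_injective _ h3)
        rw [memT_node, Bool.or_eq_true, beq_iff_eq] at h1
        rcases h1 with rfl | hacs
        · exact absurd rfl hai
        · obtain ⟨l1, u, r1, hcs1, hau, hl1⟩ := memList_split hacs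
          have hdesc : DescT (.node i cs) i a := by
            show memList a (childrenAt i (.node i cs)) = true
            rw [hchildroot]; exact hacs
          have hinv := h2 i hdesc
          rw [invT_node, if_pos rfl, hcs1, childIdx_append hl1 hau] at hinv
          have hlen1 : cs.length = l1.length + 1 + r1.length := by rw [hcs1]; simp; try omega
          have hr1 : r1 = [] := by
            cases r1 with
            | nil => rfl
            | cons _ _ => exfalso; rw [hinv] at hlen1; simp at hlen1; omega
          have hut : u = t := getLast?_eq_of_concat_eq (by rw [← hcs, hcs1]) hr1
          subst hut
          refine ⟨hau, ?_, ?_⟩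
          · intro b hb
            have hbt : memT b u = true := memT_of_descT hb
            have hbi : b ≠ i := by
              intro hcon; subst hcon
              exact lt_irrefl b (mem_child_lt hG.1 htmem hbt)
            rw [← invT_trans hG (Ne.symm hbi) hcs hbt hau]
            exact h2 b ((descT_trans hG (Ne.symm hbi) hcs hbt).2 hb)
          · rw [← childrenAt_trans hG (Ne.symm hai) hcs hau]
            exact h3

lemma childIdx_cons : childIdx a (t :: ts) = if memT a t then 0 else childIdx a ts + 1 := by
  rw [childIdx]

lemma head_word (s : ℕ → ℕ) : ∀ T : PTree, Good s T → ∀ a,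
    ((word T).head? = some a ↔
      (memT a T = true ∧ (∀ b, DescT T b a → invT s b a T = 0) ∧
        (childrenAt a T).head? = some .leaf)) := by
  refine ptree_strong_induction _ ?_ ?_
  · intro _ a; simp
  · intro i cs ih hG a
    have hlen : cs.length = s i + 1 := by
      have := hG.1; rw [isSDecAux_node] at this; exact this.1
    have hsi : 1 ≤ s i := hG.2.2 i (by simp)
    obtain ⟨t, r, hcs⟩ : ∃ t r, cs = t :: r := by
      cases cs with
      | nil => simp at hlen
      | cons t r => exact ⟨t, r, rfl⟩
    have hr : r ≠ [] := by
      rintro rfl; rw [hcs] at hlen; simp at hlen; omega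
    have hcs0 : cs = [] ++ t :: r := by simpa using hcs
    have htmem : t ∈ cs := by rw [hcs]; simp
    have hGt : Good s t := good_child hG htmem
    have hHead : (word (.node i cs)).head? =
        if word t = [] then some i else (word t).head? := by
      rw [word_node, hcs]; exact wordList_head i t r hr
    have hchildroot : childrenAt i (.node i cs) = cs := by rw [childrenAt_node, if_pos rfl]
    have hidx : ∀ x, memT x t = true → childIdx x cs = 0 := by
      intro x hx; rw [hcs, childIdx_cons, if_pos hx]
    have hidx' : ∀ x, memT x t = false → childIdx x cs ≠ 0 := by
      intro x hx; rw [hcs, childIdx_cons, if_neg (by simp [hx])]; omega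
    by_cases ht : t = PTree.leaf
    · have hwt : word t = [] := by rw [ht]; simp
      rw [hHead, if_pos hwt]
      constructor
      · rintro h
        have ha : a = i := by simpa using h.symm
        subst ha
        refine ⟨by simp, ?_, ?_⟩
        · intro b hb
          exact absurd rfl (descT_ne_root hG hb)
        · rw [hchildroot, hcs, List.head?_cons, ht]
      · rintro ⟨h1, h2, h3⟩
        by_cases hai : a = i
        · rw [hai]
        · exfalso
          rw [memT_node, Bool.or_eq_true, beq_iff_eq] at h1
          rcases h1 with rfl | hacs
          · exact hai rfl
          · have hdesc : DescT (.node i cs) i a := by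
              show memList a (childrenAt i (.node i cs)) = true
              rw [hchildroot]; exact hacs
            have hinv := h2 i hdesc
            rw [invT_node, if_pos rfl] at hinv
            have hat : memT a t = false := by rw [ht]; simp
            exact hidx' a hat hinv
    · have hwt : word t ≠ [] := by
        intro hcon; exact ht ((word_eq_nil_iff hGt).1 hcon)
      rw [hHead, if_neg hwt, ih t htmem hGt a]
      have hhead_cs : cs.head? = some t := by rw [hcs]; simp
      constructor
      · rintro ⟨h1, h2, h3⟩
        have hai : a ≠ i := by
          intro hcon; subst hcon
          exact lt_irrefl a (mem_child_lt hG.1 htmem h1)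
        have hacs : memList a cs = true := by rw [hcs]; simp [h1]
        refine ⟨by simp [hacs], ?_, ?_⟩
        · intro b hb
          by_cases hbi : b = i
          · subst hbi
            rw [invT_node, if_pos rfl]
            exact hidx a h1
          · have hbt : memT b t = true := descT_local hG (Ne.symm hbi) hcs0 h1 hb
            rw [invT_trans hG (Ne.symm hbi) hcs0 hbt h1]
            exact h2 b ((descT_trans hG (Ne.symm hbi) hcs0 hbt).1 hb)
        · rw [childrenAt_trans hG (Ne.symm hai) hcs0 h1]
          exact h3
      · rintro ⟨h1, h2, h3⟩
        have hai : a ≠ i := by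
          intro hcon; subst hcon
          rw [hchildroot, hhead_cs] at h3
          exact ht (Option.some_injective _ h3)
        rw [memT_node, Bool.or_eq_true, beq_iff_eq] at h1
        rcases h1 with rfl | hacs
        · exact absurd rfl hai
        · have hdesc : DescT (.node i cs) i a := by
            show memList a (childrenAt i (.node i cs)) = true
            rw [hchildroot]; exact hacs
          have hinv := h2 i hdesc
          rw [invT_node, if_pos rfl] at hinv
          have hat : memT a t = true := by
            rcases hmt : memT a t with _ | _
            · exact absurd hinv (hidx' a hmt)
            · rfl
          refine ⟨hat, ?_, ?_⟩
          · intro b hb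
            have hbt : memT b t = true := memT_of_descT hb
            have hbi : b ≠ i := by
              intro hcon; subst hcon
              exact lt_irrefl b (mem_child_lt hG.1 htmem hbt)
            rw [← invT_trans hG (Ne.symm hbi) hcs0 hbt hat]
            exact h2 b ((descT_trans hG (Ne.symm hbi) hcs0 hbt).2 hb)
          · rw [← childrenAt_trans hG (Ne.symm hai) hcs0 hat]
            exact h3

lemma invW_wordList_root (c a : ℕ) (hac : a ≠ c) :
    ∀ cs : List PTree,
    (∀ v ∈ cs, c ∉ word v) →
    (∀ v ∈ cs, a ∈ word v ↔ memT a v = true) →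
    memList a cs = true →
    invW (wordList c cs) c a = childIdx a cs := by
  intro cs
  induction cs with
  | nil => intro _ _ h; simp at h
  | cons u rest ih =>
    intro hcw hmem hma
    by_cases hau : memT a u = true
    · have haw : a ∈ word u := (hmem u (by simp)).2 hau
      have h0 : invW (word u) c a = 0 := by
        have := invW_le_count (w := word u) (c := c) (a := a)
        rw [List.count_eq_zero.2 (hcw u (by simp))] at this
        omega
      rw [childIdx_cons, if_pos hau]
      cases rest with
      | nil => rw [wordList_single]; exact h0
      | cons v ts => rw [wordList_cons2, invW_append_right haw]; exact h0
    · have haw : a ∉ word u := fun hcon => hau ((hmem u (by simp)).1 hcon)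
      rw [childIdx_cons, if_neg hau]
      have hma' : memList a rest = true := by
        rw [memList_cons, Bool.or_eq_true] at hma
        rcases hma with h | h
        · exact absurd h hau
        · exact h
      cases rest with
      | nil => simp at hma'
      | cons v ts =>
        rw [wordList_cons2, invW_append_left haw, List.count_eq_zero.2 (hcw u (by simp)),
          invW_cons_ne (Ne.symm (by exact fun h => hac h.symm)), if_pos rfl,
          ih (fun w hw => hcw w (by simp [hw])) (fun w hw => hmem w (by simp [hw])) hma']
        omega

lemma invW_wordList_main (s : ℕ → ℕ) (c a i : ℕ) (hac : a ≠ c) (hai : a ≠ i) (hci : c ≠ i) :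
    ∀ cs : List PTree,
    (∀ v ∈ cs, a ∈ word v ↔ memT a v = true) →
    (∀ v ∈ cs, (word v).count c = if memT c v then s c else 0) →
    (∀ v ∈ cs, memT c v = true → memT a v = true → invT s c a v = invW (word v) c a) →
    (∀ v ∈ cs, memT i v = false) →
    (labelsList cs).Nodup →
    memList a cs = true →
    invTList s c a cs = invW (wordList i cs) c a := by
  intro cs
  induction cs with
  | nil => intro _ _ _ _ _ h; simp at h
  | cons u rest ih =>
    intro hmem hcount hIH hroot hnd hma
    have hcw : memT c u = false → c ∉ word u := by
      intro h hcon
      have := List.count_eq_zero_of_not_mem (a := c) (l := word u)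
      have h2 := hcount u (by simp)
      rw [h] at h2
      simp at h2
      rw [List.count_eq_zero] at h2
      exact h2 hcon
    rw [invTList_cons]
    by_cases hau : memT a u = true
    · have haw : a ∈ word u := (hmem u (by simp)).2 hau
      by_cases hcu : memT c u = true
      · rw [if_pos (by simp [hau, hcu])]
        have h0 := hIH u (by simp) hcu hau
        cases rest with
        | nil => rw [wordList_single]; exact h0
        | cons v ts => rw [wordList_cons2, invW_append_right haw]; exact h0
      · rw [if_neg (by simp [hcu]), if_pos hau]
        have h0 : invW (word u) c a = 0 := by
          have := invW_le_count (w := word u) (c := c) (a := a)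
          rw [List.count_eq_zero.2 (hcw (by simpa using hcu))] at this
          omega
        cases rest with
        | nil => rw [wordList_single]; exact h0.symm
        | cons v ts => rw [wordList_cons2, invW_append_right haw]; exact h0.symm
    · have haw : a ∉ word u := fun hcon => hau ((hmem u (by simp)).1 hcon)
      have hma' : memList a rest = true := by
        rw [memList_cons, Bool.or_eq_true] at hma
        rcases hma with h | h
        · exact absurd h hau
        · exact h
      have hrest_ne : rest ≠ [] := by
        rintro rfl; simp at hma'
      rw [if_neg (by simp [hau]), if_neg (by simpa using hau)]
      by_cases hcu : memT c u = true
      · rw [if_pos hcu, if_pos hma']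
        -- c is left of a: all s c copies of c lie in `word u`, before the first a
        obtain ⟨v, ts, rfl⟩ : ∃ v ts, rest = v :: ts := by
          cases rest with
          | nil => exact absurd rfl hrest_ne
          | cons v ts => exact ⟨v, ts, rfl⟩
        rw [wordList_cons2, invW_append_left haw, invW_cons_ne hai]
        have hcnt_u : (word u).count c = s c := by
          have := hcount u (by simp); rwa [if_pos hcu] at this
        have hcrest : memList c (v :: ts) = false := by
          rw [← Bool.not_eq_true, memList_iff]
          intro hcon
          rw [labelsList_cons] at hnd
          exact (List.disjoint_of_nodup_append hnd) ((memT_iff u c).1 hcu) hcon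
        have hWcount : (wordList i (v :: ts)).count c = 0 := by
          rw [count_wordList i c s (v :: ts) (by simp)
            (by rw [labelsList_cons] at hnd; exact (List.nodup_append.1 hnd).2.1)
            (fun w hw => hroot w (by simp [hw]))
            (fun w hw => hcount w (by simp [hw]))]
          rw [if_neg hci, hcrest]
          simp
        have hWinv : invW (wordList i (v :: ts)) c a = 0 := by
          have := invW_le_count (w := wordList i (v :: ts)) (c := c) (a := a)
          omega
        rw [hWinv, hcnt_u, if_neg (Ne.symm hci)]
        omega
      · rw [if_neg hcu]
        obtain ⟨v, ts, rfl⟩ : ∃ v ts, rest = v :: ts := by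
          cases rest with
          | nil => exact absurd rfl hrest_ne
          | cons v ts => exact ⟨v, ts, rfl⟩
        rw [wordList_cons2, invW_append_left haw, invW_cons_ne hai,
          List.count_eq_zero.2 (hcw (by simpa using hcu)), if_neg (Ne.symm hci)]
        rw [ih (fun w hw => hmem w (by simp [hw])) (fun w hw => hcount w (by simp [hw]))
          (fun w hw => hIH w (by simp [hw]))
          (fun w hw => hroot w (by simp [hw]))
          (by rw [labelsList_cons] at hnd; exact (List.nodup_append.1 hnd).2.1) hma']
        omega

lemma inv_main (s : ℕ → ℕ) (c a : ℕ) (hac : a < c) : ∀ T : PTree, Good s T →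
    memT a T = true → memT c T = true → invT s c a T = invW (word T) c a := by
  refine ptree_strong_induction _ ?_ ?_
  · intro _ h; simp at h
  · intro i cs ih hG ha hc
    have hroot_not : ∀ u ∈ cs, memT i u = false := fun u hu => by
      rw [← Bool.not_eq_true]; intro hcon; exact lt_irrefl i (mem_child_lt hG.1 hu hcon)
    have hmemiff : ∀ v ∈ cs, (a ∈ word v ↔ memT a v = true) :=
      fun v hv => mem_word_iff (good_child hG hv)
    have hcount : ∀ v ∈ cs, (word v).count c = if memT c v then s c else 0 :=
      fun v hv => count_word s c v (good_child hG hv)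
    have hnd := nodup_labelsList_children hG
    rcases eq_or_ne i c with rfl | hic
    · -- the root is c
      have hai : a ≠ i := by omega
      have hma : memList a cs = true := by
        rw [memT_node, Bool.or_eq_true, beq_iff_eq] at ha
        rcases ha with rfl | h
        · exact absurd rfl hai
        · exact h
      rw [invT_node, if_pos rfl, word_node]
      rw [invW_wordList_root i a (by omega) cs
        (fun v hv hcon => by
          have := (mem_word_iff (good_child hG hv)).1 hcon
          exact lt_irrefl i (mem_child_lt hG.1 hv this))
        hmemiff hma]
    · -- the root is above c
      have hmc : memList c cs = true := by
        rw [memT_node, Bool.or_eq_true, beq_iff_eq] at hc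
        rcases hc with rfl | h
        · exact absurd rfl hic.symm
        · exact h
      have hcilt : c < i := by
        obtain ⟨l, u, r, hcs, hcu, _⟩ := memList_split hmc
        exact mem_child_lt hG.1 (by rw [hcs]; simp) hcu
      have hai : a ≠ i := by omega
      have hma : memList a cs = true := by
        rw [memT_node, Bool.or_eq_true, beq_iff_eq] at ha
        rcases ha with rfl | h
        · exact absurd rfl hai
        · exact h
      rw [invT_node, if_neg hic, word_node]
      exact invW_wordList_main s c a i (by omega) hai (Ne.symm hic) cs hmemiff hcount
        (fun v hv h1 h2 => ih v hv (good_child hG hv) h2 h1) hroot_not hnd hma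

lemma mem_of_getLast?_eq {α : Type*} {l : List α} {a : α} (h : l.getLast? = some a) : a ∈ l := by
  cases l with
  | nil => simp at h
  | cons x xs =>
    rw [List.getLast?_eq_getLast (l := x :: xs) (by simp)] at h
    have := List.getLast_mem (l := x :: xs) (by simp)
    rwa [Option.some_injective _ h] at this

/-- In a word `wordList i cs` an infix pair avoiding the separator `i`
occurs inside one of the child words. -/
lemma infix_pair_wordList_other (x y i : ℕ) (hx : x ≠ i) (hy : y ≠ i) :
    ∀ cs : List PTree, ([x, y] <:+: wordList i cs ↔ ∃ v ∈ cs, [x, y] <:+: word v) := by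
  intro cs
  match cs with
  | [] => simp
  | [u] => simp
  | u :: v :: ts =>
    rw [wordList_cons2, infix_pair_append, List.infix_cons_iff, pair_prefix_iff]
    have ihr := infix_pair_wordList_other x y i hx hy (v :: ts)
    constructor
    · rintro (h | (⟨h1, h2⟩ | h) | ⟨h1, h2⟩)
      · exact ⟨u, by simp, h⟩
      · simp at h1; exact absurd h1.symm hx
      · obtain ⟨w, hw, hw2⟩ := ihr.1 h
        exact ⟨w, by simp [hw], hw2⟩
      · simp at h2; exact absurd h2.symm hy
    · rintro ⟨w, hw, hw2⟩
      rcases List.mem_cons.1 hw with rfl | hw'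
      · exact Or.inl hw2
      · exact Or.inr (Or.inl (Or.inr (ihr.2 ⟨w, hw', hw2⟩)))

/-- Occurrences of `ac` in the word of a tree rooted at `c`. -/
lemma infix_ac_wordList_root (a c : ℕ) (hac : a ≠ c) :
    ∀ cs : List PTree, (∀ v ∈ cs, c ∉ word v) →
    ([a, c] <:+: wordList c cs ↔
      ∃ l t r, cs = l ++ t :: r ∧ r ≠ [] ∧ (word t).getLast? = some a) := by
  intro cs
  match cs with
  | [] =>
    intro _
    simp only [wordList_nil]
    constructor
    · intro h; simp at h
    · rintro ⟨l, t, r, h, _, _⟩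
      exact (List.append_ne_nil_of_right_ne_nil l (by simp) h.symm).elim
  | [u] =>
    intro hc
    rw [wordList_single]
    constructor
    · intro h
      exact absurd (h.subset (by simp)) (hc u (by simp))
    · rintro ⟨l, t, r, h, hr, _⟩
      exfalso
      rcases r with _ | ⟨y, r'⟩
      · exact hr rfl
      · have := congrArg List.length h
        simp at this
        omega
  | u :: v :: ts =>
    intro hc
    rw [wordList_cons2, infix_pair_append, List.infix_cons_iff, pair_prefix_iff]
    have ihr := infix_ac_wordList_root a c hac (v :: ts) (fun w hw => hc w (by simp [hw]))
    constructor
    · rintro (h | (⟨h1, h2⟩ | h) | ⟨h1, h2⟩)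
      · exact absurd (h.subset (by simp)) (hc u (by simp))
      · simp at h1; exact absurd h1.symm hac
      · obtain ⟨l, t, r, hcs, hr, hlast⟩ := ihr.1 h
        exact ⟨u :: l, t, r, by rw [hcs, List.cons_append], hr, hlast⟩
      · exact ⟨[], u, v :: ts, rfl, by simp, h1⟩
    · rintro ⟨l, t, r, hcs, hr, hlast⟩
      rcases l with _ | ⟨w, l'⟩
      · simp at hcs
        refine Or.inr (Or.inr ⟨?_, by simp⟩)
        rw [hcs.1]
        exact hlast
      · rw [List.cons_append] at hcs
        injection hcs with h1 h2
        exact Or.inr (Or.inl (Or.inr (ihr.2 ⟨l', t, r, h2, hr, hlast⟩)))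

lemma asc_main (s : ℕ → ℕ) (a c : ℕ) (hac : a < c) : ∀ T : PTree, Good s T →
    memT a T = true → memT c T = true →
    ([a, c] <:+: word T ↔
      (DescT T c a ∧ invT s c a T < s c ∧
       (∀ b, a < b → b < c → DescT T b a → invT s b a T = s b) ∧
       (childrenAt a T).getLast? = some PTree.leaf)) := by
  refine ptree_strong_induction _ ?_ ?_
  · intro _ h; simp at h
  · intro i cs ih hG ha hc
    have hnd := nodup_labelsList_children hG
    have hlen : cs.length = s i + 1 := by
      have := hG.1; rw [isSDecAux_node] at this; exact this.1
    have hnotin : ∀ v ∈ cs, i ∉ word v := fun v hv hcon => by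
      have := (mem_word_iff (good_child hG hv)).1 hcon
      exact lt_irrefl i (mem_child_lt hG.1 hv this)
    rcases eq_or_ne i c with rfl | hic
    · -- the root is c (i = c substituted)
      have hma : memList a cs = true := by
        rw [memT_node, Bool.or_eq_true, beq_iff_eq] at ha
        rcases ha with rfl | h
        · exfalso; omega
        · exact h
      have hchildroot : childrenAt i (.node i cs) = cs := by rw [childrenAt_node, if_pos rfl]
      rw [word_node, infix_ac_wordList_root a i (by omega) cs hnotin]
      constructor
      · rintro ⟨l, t, r, hcs, hr, hlast⟩
        have hGt : Good s t := good_child hG (by rw [hcs]; simp)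
        obtain ⟨h1, h2, h3⟩ := (getLast_word s t hGt a).1 hlast
        have huniq := mem_unique hnd hcs h1
        have hDesc : DescT (.node i cs) i a := by
          show memList a (childrenAt i (.node i cs)) = true
          rw [hchildroot, hcs, memList_append]; simp [h1]
        have hidx : invT s i a (.node i cs) = l.length := by
          rw [invT_node, if_pos rfl, hcs, childIdx_append huniq.1 h1]
        refine ⟨hDesc, ?_, ?_, ?_⟩
        · rw [hidx]
          rcases r with _ | ⟨y, r'⟩
          · exact absurd rfl hr
          · rw [hcs] at hlen; simp at hlen; omega
        · intro b hab hbc hb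
          have hbt : memT b t = true := descT_local hG (show i ≠ b by omega) hcs h1 hb
          rw [invT_trans hG (show i ≠ b by omega) hcs hbt h1]
          exact h2 b ((descT_trans hG (show i ≠ b by omega) hcs hbt).1 hb)
        · rw [childrenAt_trans hG (show i ≠ a by omega) hcs h1]
          exact h3
      · rintro ⟨hDesc, hlt, hball, hlastleaf⟩
        obtain ⟨l, t, r, hcs, h1, hl⟩ := memList_split hma
        have hGt : Good s t := good_child hG (by rw [hcs]; simp)
        have hidx : invT s i a (.node i cs) = l.length := by
          rw [invT_node, if_pos rfl, hcs, childIdx_append hl h1]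
        have hr : r ≠ [] := by
          rintro rfl
          rw [hidx] at hlt
          rw [hcs] at hlen; simp at hlen; omega
        refine ⟨l, t, r, hcs, hr, ?_⟩
        rw [getLast_word s t hGt a]
        refine ⟨h1, ?_, ?_⟩
        · intro b hb
          have hbt : memT b t = true := memT_of_descT hb
          have hab : a < b := desc_lt t hGt.1 b a hb
          have hbc : b < i := mem_child_lt hG.1 (by rw [hcs]; simp) hbt
          rw [← invT_trans hG (show i ≠ b by omega) hcs hbt h1]
          exact hball b hab hbc ((descT_trans hG (show i ≠ b by omega) hcs hbt).2 hb)
        · rw [← childrenAt_trans hG (show i ≠ a by omega) hcs h1]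
          exact hlastleaf
    · -- the root i is above c
      have hmc : memList c cs = true := by
        rw [memT_node, Bool.or_eq_true, beq_iff_eq] at hc
        rcases hc with rfl | h
        · exact absurd rfl hic.symm
        · exact h
      obtain ⟨l, u, r, hcs, hcu, hl⟩ := memList_split hmc
      have humem : u ∈ cs := by rw [hcs]; simp
      have hGu := good_child hG humem
      have hci : c < i := mem_child_lt hG.1 humem hcu
      have hai : a ≠ i := by omega
      rw [word_node, infix_pair_wordList_other a c i hai (by omega) cs]
      have hiff : (∃ v ∈ cs, [a, c] <:+: word v) ↔ [a, c] <:+: word u := by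
        constructor
        · rintro ⟨v, hv, hinf⟩
          have hcv : memT c v = true :=
            (mem_word_iff (good_child hG hv)).1 (hinf.subset (by simp))
          rw [hcs] at hv
          rcases List.mem_append.1 hv with hvl | hv2
          · rw [(mem_unique hnd hcs hcu).1 v hvl] at hcv; simp at hcv
          · rcases List.mem_cons.1 hv2 with rfl | hvr
            · exact hinf
            · rw [(mem_unique hnd hcs hcu).2 v hvr] at hcv; simp at hcv
        · intro h; exact ⟨u, humem, h⟩
      rw [hiff]
      by_cases hau : memT a u = true
      · rw [ih u humem hGu hau hcu]
        constructor
        · rintro ⟨hD, hlt, hball, hleaf⟩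
          refine ⟨(descT_trans hG hic hcs hcu).2 hD, ?_, ?_, ?_⟩
          · rw [invT_trans hG hic hcs hcu hau]; exact hlt
          · intro b hab hbc hb
            have hbu : memT b u = true := descT_local hG (show i ≠ b by omega) hcs hau hb
            rw [invT_trans hG (show i ≠ b by omega) hcs hbu hau]
            exact hball b hab hbc ((descT_trans hG (show i ≠ b by omega) hcs hbu).1 hb)
          · rw [childrenAt_trans hG (show i ≠ a by omega) hcs hau]; exact hleaf
        · rintro ⟨hD, hlt, hball, hleaf⟩
          refine ⟨(descT_trans hG hic hcs hcu).1 hD, ?_, ?_, ?_⟩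
          · rw [← invT_trans hG hic hcs hcu hau]; exact hlt
          · intro b hab hbc hb
            have hbu : memT b u = true := memT_of_descT hb
            rw [← invT_trans hG (show i ≠ b by omega) hcs hbu hau]
            exact hball b hab hbc ((descT_trans hG (show i ≠ b by omega) hcs hbu).2 hb)
          · rw [← childrenAt_trans hG (show i ≠ a by omega) hcs hau]; exact hleaf
      · constructor
        · intro h
          have h2 : a ∈ word u := h.subset (by simp)
          rw [mem_word_iff hGu] at h2
          exact absurd h2 hau
        · rintro ⟨hD, -, -, -⟩
          exfalso
          have h2 : memList a (childrenAt c (PTree.node i cs)) = true := hD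
          rw [childrenAt_trans hG hic hcs hcu] at h2
          exact hau (desc_mem u c a h2)

lemma head_wordList_eq (a i : ℕ) (hai : a ≠ i) (v : PTree) (ts : List PTree) :
    ((wordList i (v :: ts)).head? = some a) ↔ ((word v).head? = some a) := by
  cases ts with
  | nil => rw [wordList_single]
  | cons t' ts' =>
    rw [wordList_head i v (t' :: ts') (by simp)]
    cases hw : word v with
    | nil =>
      rw [if_pos rfl]
      simp [Ne.symm hai]
    | cons y ys =>
      rw [if_neg (by simp)]

/-- Occurrences of `ca` in the word of a tree rooted at `c`. -/
lemma infix_ca_wordList_root (a c : ℕ) (hac : a ≠ c) :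
    ∀ cs : List PTree, (∀ v ∈ cs, c ∉ word v) →
    ([c, a] <:+: wordList c cs ↔
      ∃ l t r, cs = l ++ t :: r ∧ l ≠ [] ∧ (word t).head? = some a) := by
  intro cs
  match cs with
  | [] =>
    intro _
    simp only [wordList_nil]
    constructor
    · intro h; simp at h
    · rintro ⟨l, t, r, h, _, _⟩
      exact (List.append_ne_nil_of_right_ne_nil l (by simp) h.symm).elim
  | [u] =>
    intro hc
    rw [wordList_single]
    constructor
    · intro h
      exact absurd (h.subset (by simp)) (hc u (by simp))
    · rintro ⟨l, t, r, h, hl, _⟩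
      exfalso
      rcases l with _ | ⟨y, l'⟩
      · exact hl rfl
      · have := congrArg List.length h
        simp at this
        try omega
  | u :: v :: ts =>
    intro hc
    rw [wordList_cons2, infix_pair_append, List.infix_cons_iff, pair_prefix_iff]
    have ihr := infix_ca_wordList_root a c hac (v :: ts) (fun w hw => hc w (by simp [hw]))
    constructor
    · rintro (h | (⟨h1, h2⟩ | h) | ⟨h1, h2⟩)
      · exact absurd (h.subset (by simp)) (hc u (by simp))
      · rw [List.tail_cons] at h2
        rw [head_wordList_eq a c hac v ts] at h2
        exact ⟨[u], v, ts, rfl, by simp, h2⟩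
      · obtain ⟨l, t, r, hcs, hl, hhead⟩ := ihr.1 h
        exact ⟨u :: l, t, r, by rw [hcs, List.cons_append], by simp, hhead⟩
      · exact absurd (mem_of_getLast?_eq h1) (hc u (by simp))
    · rintro ⟨l, t, r, hcs, hl, hhead⟩
      rcases l with _ | ⟨w, l'⟩
      · exact absurd rfl hl
      · rw [List.cons_append] at hcs
        injection hcs with h1 h2
        rcases l' with _ | ⟨w', l''⟩
        · simp at h2
          refine Or.inr (Or.inl (Or.inl ⟨by simp, ?_⟩))
          rw [List.tail_cons, head_wordList_eq a c hac v ts, h2.1]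
          exact hhead
        · have h2' : v :: ts = (w' :: l'') ++ t :: r := h2
          exact Or.inr (Or.inl (Or.inr (ihr.2 ⟨w' :: l'', t, r, h2', by simp, hhead⟩)))

lemma desc_main (s : ℕ → ℕ) (a c : ℕ) (hac : a < c) : ∀ T : PTree, Good s T →
    memT a T = true → memT c T = true →
    ([c, a] <:+: word T ↔
      (DescT T c a ∧ 0 < invT s c a T ∧
       (∀ b, a < b → b < c → DescT T b a → invT s b a T = 0) ∧
       (childrenAt a T).head? = some PTree.leaf)) := by
  refine ptree_strong_induction _ ?_ ?_
  · intro _ h; simp at h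
  · intro i cs ih hG ha hc
    have hnd := nodup_labelsList_children hG
    have hlen : cs.length = s i + 1 := by
      have := hG.1; rw [isSDecAux_node] at this; exact this.1
    have hnotin : ∀ v ∈ cs, i ∉ word v := fun v hv hcon => by
      have := (mem_word_iff (good_child hG hv)).1 hcon
      exact lt_irrefl i (mem_child_lt hG.1 hv this)
    rcases eq_or_ne i c with rfl | hic
    · -- the root is c (substituted as i)
      have hma : memList a cs = true := by
        rw [memT_node, Bool.or_eq_true, beq_iff_eq] at ha
        rcases ha with rfl | h
        · exfalso; omega
        · exact h
      have hchildroot : childrenAt i (.node i cs) = cs := by rw [childrenAt_node, if_pos rfl]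
      rw [word_node, infix_ca_wordList_root a i (by omega) cs hnotin]
      constructor
      · rintro ⟨l, t, r, hcs, hl0, hhead⟩
        have hGt : Good s t := good_child hG (by rw [hcs]; simp)
        obtain ⟨h1, h2, h3⟩ := (head_word s t hGt a).1 hhead
        have huniq := mem_unique hnd hcs h1
        have hDesc : DescT (.node i cs) i a := by
          show memList a (childrenAt i (.node i cs)) = true
          rw [hchildroot, hcs, memList_append]; simp [h1]
        have hidx : invT s i a (.node i cs) = l.length := by
          rw [invT_node, if_pos rfl, hcs, childIdx_append huniq.1 h1]
        refine ⟨hDesc, ?_, ?_, ?_⟩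
        · rw [hidx]
          rcases l with _ | ⟨y, l'⟩
          · exact absurd rfl hl0
          · simp
        · intro b hab hbc hb
          have hbt : memT b t = true := descT_local hG (show i ≠ b by omega) hcs h1 hb
          rw [invT_trans hG (show i ≠ b by omega) hcs hbt h1]
          exact h2 b ((descT_trans hG (show i ≠ b by omega) hcs hbt).1 hb)
        · rw [childrenAt_trans hG (show i ≠ a by omega) hcs h1]
          exact h3
      · rintro ⟨hDesc, hlt, hball, hheadleaf⟩
        obtain ⟨l, t, r, hcs, h1, hl⟩ := memList_split hma
        have hGt : Good s t := good_child hG (by rw [hcs]; simp)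
        have hidx : invT s i a (.node i cs) = l.length := by
          rw [invT_node, if_pos rfl, hcs, childIdx_append hl h1]
        have hl0 : l ≠ [] := by
          rintro rfl
          rw [hidx] at hlt
          simp at hlt
        refine ⟨l, t, r, hcs, hl0, ?_⟩
        rw [head_word s t hGt a]
        refine ⟨h1, ?_, ?_⟩
        · intro b hb
          have hbt : memT b t = true := memT_of_descT hb
          have hab : a < b := desc_lt t hGt.1 b a hb
          have hbc : b < i := mem_child_lt hG.1 (by rw [hcs]; simp) hbt
          rw [← invT_trans hG (show i ≠ b by omega) hcs hbt h1]
          exact hball b hab hbc ((descT_trans hG (show i ≠ b by omega) hcs hbt).2 hb)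
        · rw [← childrenAt_trans hG (show i ≠ a by omega) hcs h1]
          exact hheadleaf
    · -- the root i is above c
      have hmc : memList c cs = true := by
        rw [memT_node, Bool.or_eq_true, beq_iff_eq] at hc
        rcases hc with rfl | h
        · exact absurd rfl hic.symm
        · exact h
      obtain ⟨l, u, r, hcs, hcu, hl⟩ := memList_split hmc
      have humem : u ∈ cs := by rw [hcs]; simp
      have hGu := good_child hG humem
      have hci : c < i := mem_child_lt hG.1 humem hcu
      have hai : a ≠ i := by omega
      rw [word_node, infix_pair_wordList_other c a i (by omega) hai cs]
      have hiff : (∃ v ∈ cs, [c, a] <:+: word v) ↔ [c, a] <:+: word u := by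
        constructor
        · rintro ⟨v, hv, hinf⟩
          have hcv : memT c v = true :=
            (mem_word_iff (good_child hG hv)).1 (hinf.subset (by simp))
          rw [hcs] at hv
          rcases List.mem_append.1 hv with hvl | hv2
          · rw [(mem_unique hnd hcs hcu).1 v hvl] at hcv; simp at hcv
          · rcases List.mem_cons.1 hv2 with rfl | hvr
            · exact hinf
            · rw [(mem_unique hnd hcs hcu).2 v hvr] at hcv; simp at hcv
        · intro h; exact ⟨u, humem, h⟩
      rw [hiff]
      by_cases hau : memT a u = true
      · rw [ih u humem hGu hau hcu]
        constructor
        · rintro ⟨hD, hlt, hball, hleaf⟩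
          refine ⟨(descT_trans hG hic hcs hcu).2 hD, ?_, ?_, ?_⟩
          · rw [invT_trans hG hic hcs hcu hau]; exact hlt
          · intro b hab hbc hb
            have hbu : memT b u = true := descT_local hG (show i ≠ b by omega) hcs hau hb
            rw [invT_trans hG (show i ≠ b by omega) hcs hbu hau]
            exact hball b hab hbc ((descT_trans hG (show i ≠ b by omega) hcs hbu).1 hb)
          · rw [childrenAt_trans hG (show i ≠ a by omega) hcs hau]; exact hleaf
        · rintro ⟨hD, hlt, hball, hleaf⟩
          refine ⟨(descT_trans hG hic hcs hcu).1 hD, ?_, ?_, ?_⟩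
          · rw [← invT_trans hG hic hcs hcu hau]; exact hlt
          · intro b hab hbc hb
            have hbu : memT b u = true := memT_of_descT hb
            rw [← invT_trans hG (show i ≠ b by omega) hcs hbu hau]
            exact hball b hab hbc ((descT_trans hG (show i ≠ b by omega) hcs hbu).2 hb)
          · rw [← childrenAt_trans hG (show i ≠ a by omega) hcs hau]; exact hleaf
      · constructor
        · intro h
          have h2 : a ∈ word u := h.subset (by simp)
          rw [mem_word_iff hGu] at h2
          exact absurd h2 hau
        · rintro ⟨hD, -, -, -⟩
          exfalso
          have h2 : memList a (childrenAt c (PTree.node i cs)) = true := hD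
          rw [childrenAt_trans hG hic hcs hcu] at h2
          exact hau (desc_mem u c a h2)

/-- (Lemma 2.1 of the paper.) Let `T` be an `s`-decreasing
tree and `w = word T` the corresponding Stirling `s`-permutation.  For
`1 ≤ a < c ≤ n`: `(a, c)` is an ascent of `w` iff it is an ascent of `T`;
`(a, c)` is a descent of `w` iff it is a descent of `T`; and the inversion
multiplicities agree, `#_T(c, a) = #_w(c, a)`. -/
theorem tree_word_correspondence (n : ℕ) (s : ℕ → ℕ)
    (hs : ∀ i, 1 ≤ i → i ≤ n → 1 ≤ s i)
    (T : PTree) (hT : IsSDecTree s n T)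
    (a c : ℕ) (ha : 1 ≤ a) (hac : a < c) (hc : c ≤ n) :
    (WordAscent (word T) a c ↔ TreeAscent s T a c) ∧
    (WordDescent (word T) a c ↔ TreeDescent s T a c) ∧
    invT s c a T = invW (word T) c a := by
  obtain ⟨hdec, hperm⟩ := hT
  have hmemlabels : ∀ j, j ∈ labels T ↔ (1 ≤ j ∧ j ≤ n) := by
    intro j
    rw [hperm.mem_iff, List.mem_range'_1]
    omega
  have hGood : Good s T := by
    refine ⟨hdec, hperm.nodup_iff.2 (List.nodup_range' (s := 1) (n := n)), fun j hj => ?_⟩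
    have := (hmemlabels j).1 hj
    exact hs j this.1 this.2
  have haT : memT a T = true := (memT_iff T a).2 ((hmemlabels a).2 ⟨ha, by omega⟩)
  have hcT : memT c T = true := (memT_iff T c).2 ((hmemlabels c).2 ⟨by omega, hc⟩)
  have hsa : 0 < s a := hs a ha (by omega)
  have hasc := asc_main s a c hac T hGood haT hcT
  have hdsc := desc_main s a c hac T hGood haT hcT
  have hinv := inv_main s c a hac T hGood haT hcT
  refine ⟨?_, ?_, hinv⟩
  · have e1 : WordAscent (word T) a c ↔ (a < c ∧ ∃ u v, word T = u ++ a :: c :: v) := Iff.rfl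
    have e2 : TreeAscent s T a c ↔
        (a < c ∧ DescT T c a ∧ invT s c a T < s c ∧
          (∀ b, a < b → b < c → DescT T b a → invT s b a T = s b) ∧
          (0 < s a → (childrenAt a T).getLast? = some PTree.leaf)) := Iff.rfl
    rw [e1, e2]
    constructor
    · rintro ⟨h1, u, v, h⟩
      have hin : [a, c] <:+: word T := ⟨u, v, by rw [h]; simp⟩
      obtain ⟨d1, d2, d3, d4⟩ := hasc.1 hin
      exact ⟨hac, d1, d2, d3, fun _ => d4⟩
    · rintro ⟨h1, d1, d2, d3, d4⟩
      obtain ⟨u, v, h⟩ := hasc.2 ⟨d1, d2, d3, d4 hsa⟩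
      exact ⟨hac, u, v, by rw [← h]; simp⟩
  · have e1 : WordDescent (word T) a c ↔ (a < c ∧ ∃ u v, word T = u ++ c :: a :: v) := Iff.rfl
    have e2 : TreeDescent s T a c ↔
        (a < c ∧ DescT T c a ∧ 0 < invT s c a T ∧
          (∀ b, a < b → b < c → DescT T b a → invT s b a T = 0) ∧
          (0 < s a → (childrenAt a T).head? = some PTree.leaf)) := Iff.rfl
    rw [e1, e2]
    constructor
    · rintro ⟨h1, u, v, h⟩
      have hin : [c, a] <:+: word T := ⟨u, v, by rw [h]; simp⟩
      obtain ⟨d1, d2, d3, d4⟩ := hdsc.1 hin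
      exact ⟨hac, d1, d2, d3, fun _ => d4⟩
    · rintro ⟨h1, d1, d2, d3, d4⟩
      obtain ⟨u, v, h⟩ := hdsc.2 ⟨d1, d2, d3, d4 hsa⟩
      exact ⟨hac, u, v, by rw [← h]; simp⟩

end SPermutahedron
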